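/- Let d ≥ 1, let g ≥ 0 and μ ≥ 0, and let h be a smooth, strictly positive solution on [0,T] of the lubrication equation ∂_t h − div(g h ∇h − μ h ∇Δh) = 0 on 𝕋^d. Then for every t ∈ [0,T], (d/dt) ∫_{𝕋^d} |∇h(t,x)|^2 dx ≤ 0. -/

import Mathlib

open MeasureTheory Real

/-- Partial derivative `∂ᵢ f` of a function on `ℝᵈ` (as `EuclideanSpace`). -/
noncomputable def pder {d : ℕ} (i : Fin d) (f : EuclideanSpace ℝ (Fin d) → ℝ)
    (x : EuclideanSpace ℝ (Fin d)) : ℝ :=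
  fderiv ℝ f x (EuclideanSpace.single i 1)

/-- The Laplacian `Δ f = ∑ᵢ ∂ᵢ∂ᵢ f`. -/
noncomputable def lap {d : ℕ} (f : EuclideanSpace ℝ (Fin d) → ℝ)
    (x : EuclideanSpace ℝ (Fin d)) : ℝ :=
  ∑ i, pder i (pder i f) x

/-- Squared norm of the gradient, `|∇f|² = ∑ᵢ (∂ᵢ f)²`. -/
noncomputable def gradSq {d : ℕ} (f : EuclideanSpace ℝ (Fin d) → ℝ)
    (x : EuclideanSpace ℝ (Fin d)) : ℝ :=
  ∑ i, (pder i f x) ^ 2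

/-- Squared Frobenius norm of the Hessian, `|∇∇f|² = ∑ᵢⱼ (∂ᵢ∂ⱼ f)²`. -/
noncomputable def hessSq {d : ℕ} (f : EuclideanSpace ℝ (Fin d) → ℝ)
    (x : EuclideanSpace ℝ (Fin d)) : ℝ :=
  ∑ i, ∑ j, (pder i (pder j f) x) ^ 2

/-- The fundamental domain `[0,1)^d` of the torus `𝕋^d`. -/
def fundDom (d : ℕ) : Set (EuclideanSpace ℝ (Fin d)) :=
  {x | ∀ i, 0 ≤ x i ∧ x i < 1}

/-- `ℤ^d`-periodicity of a function on `ℝ^d`. -/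
def ZPeriodic {d : ℕ} (f : EuclideanSpace ℝ (Fin d) → ℝ) : Prop :=
  ∀ (x : EuclideanSpace ℝ (Fin d)) (k : Fin d → ℤ),
    f (x + (WithLp.equiv 2 (Fin d → ℝ)).symm (fun i => (k i : ℝ))) = f x

namespace Lub

theorem cd_fderiv {E F : Type*} [NormedAddCommGroup E] [NormedSpace ℝ E]
    [NormedAddCommGroup F] [NormedSpace ℝ F] {f : E → F} (hf : ContDiff ℝ (⊤ : ℕ∞) f) :
    ContDiff ℝ (⊤ : ℕ∞) (fderiv ℝ f) :=
  hf.fderiv_right (by exact_mod_cast le_top)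

theorem cd_diff {E F : Type*} [NormedAddCommGroup E] [NormedSpace ℝ E]
    [NormedAddCommGroup F] [NormedSpace ℝ F] {f : E → F} (hf : ContDiff ℝ (⊤ : ℕ∞) f) :
    Differentiable ℝ f :=
  hf.differentiable (by simp)

variable {d : ℕ}

/-- Smooth and `ℤᵈ`-periodic. -/
structure SP (f : EuclideanSpace ℝ (Fin d) → ℝ) : Prop where
  smooth : ContDiff ℝ (⊤ : ℕ∞) f
  per : ZPeriodic f

theorem contDiff_pder {f : EuclideanSpace ℝ (Fin d) → ℝ} (hf : ContDiff ℝ (⊤ : ℕ∞) f)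
    (i : Fin d) : ContDiff ℝ (⊤ : ℕ∞) (pder i f) :=
  (cd_fderiv hf).clm_apply contDiff_const

theorem fderiv_periodic {f : EuclideanSpace ℝ (Fin d) → ℝ} (hf : ContDiff ℝ (⊤ : ℕ∞) f)
    (hp : ZPeriodic f) (x : EuclideanSpace ℝ (Fin d)) (k : Fin d → ℤ) :
    fderiv ℝ f (x + (WithLp.equiv 2 (Fin d → ℝ)).symm (fun i => (k i : ℝ))) = fderiv ℝ f x := by
  set c := (WithLp.equiv 2 (Fin d → ℝ)).symm (fun i => (k i : ℝ))
  have h1 : HasFDerivAt f (fderiv ℝ f (x + c)) (x + c) :=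
    (cd_diff hf (x + c)).hasFDerivAt
  have h2 : HasFDerivAt (fun y => f (y + c)) (fderiv ℝ f (x + c)) x := by
    have := h1.comp x ((hasFDerivAt_id x).add_const c)
    exact this
  have h3 : (fun y => f (y + c)) = f := funext fun y => hp y k
  rw [h3] at h2
  exact h2.fderiv.symm

theorem SP.pder {f : EuclideanSpace ℝ (Fin d) → ℝ} (hf : SP f) (i : Fin d) : SP (pder i f) :=
  ⟨contDiff_pder hf.smooth i, fun x k => by
    unfold _root_.pder; rw [fderiv_periodic hf.smooth hf.per x k]⟩

theorem pder_pder_eq {f : EuclideanSpace ℝ (Fin d) → ℝ} (hf : ContDiff ℝ (⊤ : ℕ∞) f)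
    (i j : Fin d) (x : EuclideanSpace ℝ (Fin d)) :
    pder i (pder j f) x
      = fderiv ℝ (fderiv ℝ f) x (EuclideanSpace.single i 1) (EuclideanSpace.single j 1) := by
  have hdf : ContDiff ℝ (⊤ : ℕ∞) (fderiv ℝ f) := cd_fderiv hf
  have h1 : HasFDerivAt (fderiv ℝ f) (fderiv ℝ (fderiv ℝ f) x) x :=
    (cd_diff hdf x).hasFDerivAt
  have h2 := h1.clm_apply (hasFDerivAt_const (EuclideanSpace.single j 1) x)
  show fderiv ℝ (fun y => fderiv ℝ f y (EuclideanSpace.single j 1)) x (EuclideanSpace.single i 1)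
    = _
  rw [h2.fderiv]; simp

theorem pder_comm {f : EuclideanSpace ℝ (Fin d) → ℝ} (hf : ContDiff ℝ (⊤ : ℕ∞) f)
    (i j : Fin d) (x : EuclideanSpace ℝ (Fin d)) :
    pder i (pder j f) x = pder j (pder i f) x := by
  rw [pder_pder_eq hf, pder_pder_eq hf]
  exact second_derivative_symmetric
    (fun y => (cd_diff hf y).hasFDerivAt)
    ((cd_diff (cd_fderiv hf) x).hasFDerivAt) _ _

theorem pder_mul {a b : EuclideanSpace ℝ (Fin d) → ℝ} (ha : Differentiable ℝ a)
    (hb : Differentiable ℝ b) (i : Fin d) (x) :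
    pder i (fun y => a y * b y) x = pder i a x * b x + a x * pder i b x := by
  unfold pder
  rw [fderiv_fun_mul (ha x) (hb x)]
  simp [add_comm, mul_comm]

theorem pder_const_mul {b : EuclideanSpace ℝ (Fin d) → ℝ} (hb : Differentiable ℝ b)
    (c : ℝ) (i : Fin d) (x) :
    pder i (fun y => c * b y) x = c * pder i b x := by
  unfold pder; rw [fderiv_const_mul (hb x)]; simp

theorem pder_sub {a b : EuclideanSpace ℝ (Fin d) → ℝ} (ha : Differentiable ℝ a)
    (hb : Differentiable ℝ b) (i : Fin d) (x) :
    pder i (fun y => a y - b y) x = pder i a x - pder i b x := by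
  unfold pder; rw [fderiv_fun_sub (ha x) (hb x)]; simp

theorem pder_sum {ι : Type*} (s : Finset ι) {a : ι → EuclideanSpace ℝ (Fin d) → ℝ}
    (ha : ∀ j ∈ s, Differentiable ℝ (a j)) (i : Fin d) (x) :
    pder i (fun y => ∑ j ∈ s, a j y) x = ∑ j ∈ s, pder i (a j) x := by
  unfold pder
  rw [fderiv_fun_sum (fun j hj => ha j hj x)]
  simp

theorem continuous_eval (i : Fin d) : Continuous fun x : EuclideanSpace ℝ (Fin d) => x i := by
  simpa using (EuclideanSpace.proj (𝕜 := ℝ) (i : Fin d)).continuous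

theorem measurableSet_fundDom : MeasurableSet (fundDom d) := by
  have : fundDom d = ⋂ i, ((fun x : EuclideanSpace ℝ (Fin d) => x i) ⁻¹' (Set.Ico 0 1)) := by
    ext x; simp [fundDom, Set.mem_iInter]
  rw [this]
  exact MeasurableSet.iInter fun i =>
    (continuous_eval i).measurable measurableSet_Ico

theorem fundDom_subset_ball : fundDom d ⊆ Metric.closedBall 0 (d + 1) := by
  intro x hx
  rw [Metric.mem_closedBall, dist_zero_right]
  have h1 : ‖x‖ = Real.sqrt (∑ i, ‖x i‖ ^ 2) := EuclideanSpace.norm_eq x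
  have h2 : (∑ i, ‖x i‖ ^ 2) ≤ (d : ℝ) := by
    calc (∑ i, ‖x i‖ ^ 2) ≤ ∑ _i : Fin d, (1 : ℝ) := by
          refine Finset.sum_le_sum fun i _ => ?_
          rw [Real.norm_eq_abs, abs_of_nonneg (hx i).1]
          nlinarith [(hx i).2, (hx i).1]
      _ = d := by simp
  rw [h1]
  calc Real.sqrt (∑ i, ‖x i‖ ^ 2) ≤ Real.sqrt d := Real.sqrt_le_sqrt h2
    _ ≤ Real.sqrt ((d + 1) ^ 2) := Real.sqrt_le_sqrt (by nlinarith [Nat.cast_nonneg (α := ℝ) d])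
    _ = d + 1 := by rw [Real.sqrt_sq (by positivity)]

theorem integrableOn_fundDom {f : EuclideanSpace ℝ (Fin d) → ℝ} (hf : Continuous f) :
    IntegrableOn f (fundDom d) := by
  refine IntegrableOn.mono_set ?_ fundDom_subset_ball
  exact hf.continuousOn.integrableOn_compact (isCompact_closedBall 0 _)

theorem volume_fundDom_lt_top : volume (fundDom d) < ⊤ :=
  lt_of_le_of_lt (measure_mono fundDom_subset_ball) measure_closedBall_lt_top
section
open Set

theorem integral_pder_eq_zero (hd : 1 ≤ d) {f : EuclideanSpace ℝ (Fin d) → ℝ}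
    (hf : ContDiff ℝ (⊤ : ℕ∞) f) (hp : ZPeriodic f) (i : Fin d) :
    ∫ x in fundDom d, pder i f x = 0 := by
  obtain ⟨n, rfl⟩ : ∃ n, d = n + 1 := ⟨d - 1, (Nat.succ_pred_eq_of_pos hd).symm⟩
  -- transfer to `Fin (n+1) → ℝ`
  set ψ : (Fin (n + 1) → ℝ) → EuclideanSpace ℝ (Fin (n + 1)) :=
    ⇑(WithLp.equiv 2 (Fin (n + 1) → ℝ)).symm with hψ
  have hψcle : ψ = ⇑(PiLp.continuousLinearEquiv 2 ℝ (fun _ : Fin (n + 1) => ℝ)).symm := rfl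
  set F : (Fin (n + 1) → ℝ) → ℝ := fun y => f (ψ y) with hF
  have hFc : ContDiff ℝ (⊤ : ℕ∞) F := by
    rw [hF, hψcle]
    exact hf.comp (PiLp.continuousLinearEquiv 2 ℝ (fun _ : Fin (n + 1) => ℝ)).symm.contDiff
  have hsingle : ψ (Pi.single i 1) = EuclideanSpace.single i 1 := rfl
  -- derivative of F
  have hFder : ∀ y, HasFDerivAt F (fderiv ℝ F y) y := fun y => (cd_diff hFc y).hasFDerivAt
  have hFdir : ∀ y, fderiv ℝ F y (Pi.single i 1) = pder i f (ψ y) := by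
    intro y
    have h1 : HasFDerivAt f (fderiv ℝ f (ψ y)) (ψ y) := (cd_diff hf (ψ y)).hasFDerivAt
    have hψder : HasFDerivAt ψ
        ((PiLp.continuousLinearEquiv 2 ℝ (fun _ : Fin (n + 1) => ℝ)).symm :
          (Fin (n + 1) → ℝ) →L[ℝ] EuclideanSpace ℝ (Fin (n + 1))) y := by
      rw [hψcle]
      exact (PiLp.continuousLinearEquiv 2 ℝ (fun _ : Fin (n + 1) => ℝ)).symm.hasFDerivAt
    have h2 : HasFDerivAt F ((fderiv ℝ f (ψ y)).comp
        ((PiLp.continuousLinearEquiv 2 ℝ (fun _ : Fin (n + 1) => ℝ)).symm :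
          (Fin (n + 1) → ℝ) →L[ℝ] EuclideanSpace ℝ (Fin (n + 1)))) y :=
      HasFDerivAt.comp y h1 hψder
    rw [h2.fderiv]
    simp only [ContinuousLinearMap.comp_apply]
    rfl
  -- the vector field
  set L : (Fin (n + 1) → ℝ) → ((Fin (n + 1) → ℝ) →L[ℝ] ℝ) := fun y => fderiv ℝ F y with hL
  classical
  set fvec : (Fin (n + 1) → ℝ) → (Fin (n + 1) → ℝ) := fun y => Pi.single i (F y) with hfvec
  set f' : (Fin (n + 1) → ℝ) → ((Fin (n + 1) → ℝ) →L[ℝ] (Fin (n + 1) → ℝ)) :=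
    fun y => ContinuousLinearMap.pi (fun j => if j = i then L y else 0) with hf'
  have hfd : ∀ y, HasFDerivAt fvec (f' y) y := by
    intro y
    rw [hasFDerivAt_pi']
    intro j
    by_cases hj : j = i
    · subst hj
      have h1 : (fun y => fvec y j) = F := by
        funext z; simp [hfvec]
      have h2 : (ContinuousLinearMap.proj j).comp (f' y) = L y := by
        rw [hf']; rw [ContinuousLinearMap.proj_pi]; simp
      rw [h1, h2]
      exact hFder y
    · have h1 : (fun y => fvec y j) = fun _ => (0 : ℝ) := by
        funext z; simp [hfvec, Pi.single_eq_of_ne hj]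
      have h2 : (ContinuousLinearMap.proj j).comp (f' y) = 0 := by
        rw [hf']; rw [ContinuousLinearMap.proj_pi]; simp [hj]
      rw [h1, h2]
      exact hasFDerivAt_const (0:ℝ) y
  have hdivg : (fun y => ∑ j, f' y (Pi.single j 1) j) = fun y => pder i f (ψ y) := by
    funext y
    have : ∀ j, f' y (Pi.single j 1) j = if j = i then L y (Pi.single j 1) else 0 := by
      intro j
      by_cases hj : j = i <;> simp [hf', ContinuousLinearMap.pi_apply, hj]
    rw [Finset.sum_congr rfl fun j _ => this j, Finset.sum_ite_eq' Finset.univ i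
      (fun j => L y (Pi.single j 1))]
    simp [hL, hFdir y]
  -- apply divergence theorem on [0,1]^d
  have hle : (0 : Fin (n + 1) → ℝ) ≤ 1 := fun _ => zero_le_one
  have Hc : ContinuousOn fvec (Icc 0 1) := by
    apply Continuous.continuousOn
    apply continuous_pi
    intro j
    by_cases hj : j = i
    · subst hj
      simpa [hfvec] using hFc.continuous
    · have : (fun y => fvec y j) = fun _ => (0 : ℝ) := by
        funext z; simp [hfvec, Pi.single_eq_of_ne hj]
      rw [this]; exact continuous_const
  have Hi : IntegrableOn (fun y => ∑ j, f' y (Pi.single j 1) j) (Icc 0 1) := by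
    rw [hdivg]
    apply ContinuousOn.integrableOn_compact isCompact_Icc
    apply Continuous.continuousOn
    have : Continuous fun y => fderiv ℝ F y (Pi.single i 1) :=
      ((cd_fderiv hFc).continuous).clm_apply continuous_const
    simp only [hFdir] at this
    exact this
  have key := integral_divergence_of_hasFDerivAt_off_countable
    (0 : Fin (n+1) → ℝ) 1 hle fvec f' ∅
    countable_empty Hc (fun x _ => hfd x) Hi
  -- the boundary terms vanish by periodicity
  have hper' : ∀ (z : Fin (n + 1) → ℝ), F (z + Pi.single i 1) = F z := by
    intro z
    have hk : (fun j => (((Pi.single i 1 : Fin (n + 1) → ℤ) j : ℝ))) = Pi.single i (1 : ℝ) := by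
      funext j
      by_cases hj : j = i
      · subst hj; simp
      · simp [Pi.single_eq_of_ne hj]
    have := hp (ψ z) (Pi.single i 1)
    rw [hk] at this
    have hadd : ψ z + (WithLp.equiv 2 (Fin (n + 1) → ℝ)).symm (Pi.single i (1:ℝ))
        = ψ (z + Pi.single i 1) := rfl
    rw [hadd] at this
    exact this
  have hfaces : ∀ j : Fin (n + 1), ∀ x : Fin n → ℝ,
      fvec (j.insertNth ((1 : Fin (n+1) → ℝ) j) x) j = fvec (j.insertNth ((0 : Fin (n+1) → ℝ) j) x) j := by
    intro j x
    by_cases hj : j = i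
    · subst hj
      simp only [hfvec, Pi.single_eq_same]
      have hins : (j.insertNth ((1 : Fin (n+1) → ℝ) j) x : Fin (n+1) → ℝ)
          = j.insertNth ((0 : Fin (n+1) → ℝ) j) x + Pi.single j 1 := by
        funext m
        rcases eq_or_ne m j with rfl | hne
        · simp
        · rcases Fin.exists_succAbove_eq hne with ⟨k, rfl⟩
          have hne' : j.succAbove k ≠ j := Fin.succAbove_ne j k
          simp [Fin.insertNth_apply_succAbove, Pi.single_eq_of_ne hne']
      rw [hins]
      exact hper' _
    · simp [hfvec, Pi.single_eq_of_ne hj]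
  have hrhs : (∑ j : Fin (n+1),
      ((∫ (x : Fin n → ℝ) in Set.Icc ((0:Fin (n+1)→ℝ) ∘ j.succAbove) ((1:Fin (n+1)→ℝ) ∘ j.succAbove),
          fvec (j.insertNth ((1:Fin (n+1)→ℝ) j) x) j) -
        ∫ (x : Fin n → ℝ) in Set.Icc ((0:Fin (n+1)→ℝ) ∘ j.succAbove) ((1:Fin (n+1)→ℝ) ∘ j.succAbove),
          fvec (j.insertNth ((0:Fin (n+1)→ℝ) j) x) j)) = 0 := by
    refine Finset.sum_eq_zero fun j _ => ?_
    have : (fun x : Fin n → ℝ => fvec (j.insertNth ((1:Fin (n+1)→ℝ) j) x) j)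
        = fun x : Fin n → ℝ => fvec (j.insertNth ((0:Fin (n+1)→ℝ) j) x) j :=
      funext fun x => hfaces j x
    rw [this, sub_self]
  rw [hrhs] at key
  -- transfer the integral from `fundDom` to the cube
  have hmp := EuclideanSpace.volume_preserving_symm_measurableEquiv_toLp (Fin (n+1))
  have hemb := (MeasurableEquiv.toLp 2 (Fin (n+1) → ℝ)).symm.measurableEmbedding
  have htrans := hmp.setIntegral_preimage_emb hemb (fun y => pder i f (ψ y))
    (Set.pi univ fun _ => Ico (0:ℝ) 1)
  have hpre : (MeasurableEquiv.toLp 2 (Fin (n+1) → ℝ)).symm ⁻¹'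
      (Set.pi univ fun _ => Ico (0:ℝ) 1) = fundDom (n+1) := by
    ext x
    simp only [Set.mem_preimage, Set.mem_pi, Set.mem_univ, forall_true_left, Set.mem_Ico,
      fundDom, Set.mem_setOf_eq, MeasurableEquiv.coe_toLp_symm]
  have hid : (fun x : EuclideanSpace ℝ (Fin (n+1)) =>
      pder i f (ψ ((MeasurableEquiv.toLp 2 (Fin (n+1) → ℝ)).symm x))) = fun x => pder i f x := by
    funext x
    congr 1
  rw [hpre, hid] at htrans
  -- replace Ico-cube by Icc-cube
  have hIcoIcc : ∫ y in Set.pi univ (fun _ => Ico (0:ℝ) 1), pder i f (ψ y)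
      = ∫ y in Set.Icc (0 : Fin (n+1) → ℝ) 1, pder i f (ψ y) := by
    rw [volume_pi, setIntegral_congr_set Measure.univ_pi_Ico_ae_eq_Icc]
    rfl
  rw [hIcoIcc] at htrans
  rw [htrans, ← hdivg] at *
  rw [key]

end

theorem SP.mul {a b : EuclideanSpace ℝ (Fin d) → ℝ} (ha : SP a) (hb : SP b) :
    SP (fun y => a y * b y) :=
  ⟨ha.smooth.mul hb.smooth, fun x k => by simp only [ha.per x k, hb.per x k]⟩

theorem SP.add {a b : EuclideanSpace ℝ (Fin d) → ℝ} (ha : SP a) (hb : SP b) :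
    SP (fun y => a y + b y) :=
  ⟨ha.smooth.add hb.smooth, fun x k => by simp only [ha.per x k, hb.per x k]⟩

theorem SP.sub {a b : EuclideanSpace ℝ (Fin d) → ℝ} (ha : SP a) (hb : SP b) :
    SP (fun y => a y - b y) :=
  ⟨ha.smooth.sub hb.smooth, fun x k => by simp only [ha.per x k, hb.per x k]⟩

theorem SP.const_mul {b : EuclideanSpace ℝ (Fin d) → ℝ} (hb : SP b) (c : ℝ) :
    SP (fun y => c * b y) :=
  ⟨contDiff_const.mul hb.smooth, fun x k => by simp only [hb.per x k]⟩

theorem SP.sum {ι : Type*} {s : Finset ι} {a : ι → EuclideanSpace ℝ (Fin d) → ℝ}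
    (ha : ∀ j ∈ s, SP (a j)) : SP (fun y => ∑ j ∈ s, a j y) :=
  ⟨ContDiff.sum fun j hj => (ha j hj).smooth,
   fun x k => Finset.sum_congr rfl fun j hj => (ha j hj).per x k⟩

theorem SP.lap {v : EuclideanSpace ℝ (Fin d) → ℝ} (hv : SP v) : SP (_root_.lap v) := by
  have : _root_.lap v = fun y => ∑ i, _root_.pder i (_root_.pder i v) y := rfl
  rw [this]
  exact SP.sum fun i _ => (hv.pder i).pder i

theorem SP.integrableOn {f : EuclideanSpace ℝ (Fin d) → ℝ} (hf : SP f) :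
    IntegrableOn f (fundDom d) :=
  integrableOn_fundDom hf.smooth.continuous

/-- Integration by parts on the torus. -/
theorem ibp (hd : 1 ≤ d) {a b : EuclideanSpace ℝ (Fin d) → ℝ} (ha : SP a) (hb : SP b)
    (i : Fin d) :
    ∫ x in fundDom d, a x * pder i b x = -∫ x in fundDom d, pder i a x * b x := by
  have hab : SP (fun y => a y * b y) := ha.mul hb
  have h0 := integral_pder_eq_zero hd hab.smooth hab.per i
  have h1 : (fun x => pder i (fun y => a y * b y) x)
      = fun x => pder i a x * b x + a x * pder i b x :=
    funext fun x => pder_mul (cd_diff ha.smooth) (cd_diff hb.smooth) i x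
  rw [h1] at h0
  have h2 : IntegrableOn (fun x => pder i a x * b x) (fundDom d) := ((ha.pder i).mul hb).integrableOn
  have h3 : IntegrableOn (fun x => a x * pder i b x) (fundDom d) := (ha.mul (hb.pder i)).integrableOn
  rw [integral_add h2 h3] at h0
  linarith

theorem integral_sum_comm {ι : Type*} (s : Finset ι) {f : ι → EuclideanSpace ℝ (Fin d) → ℝ}
    (hf : ∀ j ∈ s, SP (f j)) :
    ∫ x in fundDom d, ∑ j ∈ s, f j x = ∑ j ∈ s, ∫ x in fundDom d, f j x :=
  integral_finset_sum s fun j hj => (hf j hj).integrableOn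

theorem icongr {f h : EuclideanSpace ℝ (Fin d) → ℝ} (hfh : ∀ x, f x = h x) :
    ∫ x in fundDom d, f x = ∫ x in fundDom d, h x := by
  congr 1; exact funext hfh

theorem third_swap {v : EuclideanSpace ℝ (Fin d) → ℝ} (hv : SP v) (i : Fin d) (x) :
    ∑ j, pder j (pder j (pder i v)) x = pder i (lap v) x := by
  have h1 : ∀ j : Fin d, pder j (pder j (pder i v)) x = pder i (pder j (pder j v)) x := by
    intro j
    have hswap : (pder j (pder i v)) = (pder i (pder j v)) :=
      funext fun y => pder_comm hv.smooth j i y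
    rw [hswap]
    exact pder_comm (contDiff_pder hv.smooth j) j i x
  rw [Finset.sum_congr rfl fun j _ => h1 j]
  have h2 : ∑ j, pder i (pder j (pder j v)) x
      = pder i (fun y => ∑ j, pder j (pder j v) y) x := by
    rw [pder_sum Finset.univ (fun j _ => cd_diff (contDiff_pder (contDiff_pder hv.smooth j) j)) i x]
  rw [h2]
  rfl

theorem elliptic (hd : 1 ≤ d) {v : EuclideanSpace ℝ (Fin d) → ℝ} (hv : SP v)
    (hpos : ∀ x, 0 ≤ v x) {g μ : ℝ} (hg : 0 ≤ g) (hμ : 0 ≤ μ) :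
    (∫ x in fundDom d, ∑ j, pder j v x *
        pder j (fun y => ∑ i, pder i
          (fun z => g * v z * pder i v z - μ * v z * pder i (lap v) z) y) x) ≤ 0 := by
  classical
  set W : EuclideanSpace ℝ (Fin d) → ℝ :=
    fun y => ∑ i, pder i (fun z => g * v z * pder i v z - μ * v z * pder i (lap v) z) y with hW
  have hvi : ∀ i : Fin d, SP (pder i v) := fun i => hv.pder i
  have hvd : Differentiable ℝ v := cd_diff hv.smooth
  have hvid : ∀ i : Fin d, Differentiable ℝ (pder i v) := fun i => cd_diff (hvi i).smooth
  have hviid : ∀ i j : Fin d, Differentiable ℝ (pder j (pder i v)) :=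
    fun i j => cd_diff ((hvi i).pder j).smooth
  have hLsp : SP (lap v) := hv.lap
  have hLi : ∀ i : Fin d, SP (pder i (lap v)) := fun i => hLsp.pder i
  have hFsp : ∀ i : Fin d, SP (fun z => g * v z * pder i v z - μ * v z * pder i (lap v) z) :=
    fun i => ((hv.const_mul g).mul (hvi i)).sub ((hv.const_mul μ).mul (hLi i))
  have hWsp : SP W := by rw [hW]; exact SP.sum fun i _ => (hFsp i).pder i
  set A := ∑ i : Fin d, ∫ x in fundDom d, v x * pder i v x * pder i (lap v) x with hA
  set C := ∑ i : Fin d, ∫ x in fundDom d,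
    v x * (pder i (lap v) x * pder i (lap v) x) with hC
  set P := ∫ x in fundDom d, (∑ i, pder i v x * pder i v x) * lap v x with hP
  set Q := ∫ x in fundDom d, v x * lap v x * lap v x with hQdef
  set R := ∫ x in fundDom d,
    v x * (∑ j, ∑ i, pder j (pder i v) x * pder j (pder i v) x) with hRdef
  set B := ∑ j : Fin d, ∫ x in fundDom d,
    (∑ i, pder i v x * pder j (pder i v) x) * pder j v x with hB
  -- Step 1 : LHS = g * A - μ * C
  have e1 : ∫ x in fundDom d, (∑ j, pder j v x * pder j W x)
      = ∑ j, ∫ x in fundDom d, pder j v x * pder j W x :=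
    integral_sum_comm Finset.univ fun j _ => (hvi j).mul (hWsp.pder j)
  have e2 : ∀ j : Fin d, ∫ x in fundDom d, pder j v x * pder j W x
      = -∫ x in fundDom d, pder j (pder j v) x * W x := fun j => ibp hd (hvi j) hWsp j
  have e3 : ∑ j : Fin d, ∫ x in fundDom d, pder j (pder j v) x * W x
      = ∫ x in fundDom d, lap v x * W x := by
    rw [← integral_sum_comm Finset.univ (fun j _ => ((hvi j).pder j).mul hWsp)]
    exact icongr fun x => by simp [lap, Finset.sum_mul]
  have e4 : ∫ x in fundDom d, lap v x * W x
      = ∑ i, ∫ x in fundDom d, lap v x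
          * pder i (fun z => g * v z * pder i v z - μ * v z * pder i (lap v) z) x := by
    rw [← integral_sum_comm Finset.univ (fun i _ => hLsp.mul ((hFsp i).pder i))]
    exact icongr fun x => by simp [hW, Finset.mul_sum]
  have e5 : ∀ i : Fin d, ∫ x in fundDom d, lap v x
        * pder i (fun z => g * v z * pder i v z - μ * v z * pder i (lap v) z) x
      = -∫ x in fundDom d, pder i (lap v) x
          * (g * v x * pder i v x - μ * v x * pder i (lap v) x) :=
    fun i => ibp hd hLsp (hFsp i) i
  have e6 : ∀ i : Fin d, ∫ x in fundDom d, pder i (lap v) x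
        * (g * v x * pder i v x - μ * v x * pder i (lap v) x)
      = g * (∫ x in fundDom d, v x * pder i v x * pder i (lap v) x)
        - μ * (∫ x in fundDom d, v x * (pder i (lap v) x * pder i (lap v) x)) := by
    intro i
    have h1 : ∀ x, pder i (lap v) x * (g * v x * pder i v x - μ * v x * pder i (lap v) x)
        = g * (v x * pder i v x * pder i (lap v) x)
          - μ * (v x * (pder i (lap v) x * pder i (lap v) x)) := fun x => by ring
    rw [icongr h1, integral_sub
      ((((hv.mul (hvi i)).mul (hLi i)).const_mul g).integrableOn)
      (((hv.mul ((hLi i).mul (hLi i))).const_mul μ).integrableOn),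
      integral_const_mul, integral_const_mul]
  have key1 : ∫ x in fundDom d, (∑ j, pder j v x * pder j W x) = g * A - μ * C := by
    rw [e1, Finset.sum_congr rfl fun j _ => e2 j, Finset.sum_neg_distrib, e3, e4,
      Finset.sum_congr rfl fun i _ => (e5 i).trans (congrArg Neg.neg (e6 i)),
      Finset.sum_neg_distrib, Finset.sum_sub_distrib, ← Finset.mul_sum, ← Finset.mul_sum,
      ← hA, ← hC]
    ring
  -- Step 2 : A = -P - Q
  have f1 : ∀ i : Fin d, ∫ x in fundDom d, v x * pder i v x * pder i (lap v) x
      = -∫ x in fundDom d, pder i (fun y => v y * pder i v y) x * lap v x :=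
    fun i => ibp hd (hv.mul (hvi i)) hLsp i
  have f2 : ∀ i : Fin d, ∫ x in fundDom d, pder i (fun y => v y * pder i v y) x * lap v x
      = (∫ x in fundDom d, pder i v x * pder i v x * lap v x)
        + ∫ x in fundDom d, v x * pder i (pder i v) x * lap v x := by
    intro i
    rw [← integral_add (((hvi i).mul (hvi i)).mul hLsp).integrableOn
      ((hv.mul ((hvi i).pder i)).mul hLsp).integrableOn]
    refine icongr fun x => ?_
    rw [pder_mul hvd (hvid i) i x]
    ring
  have f3 : ∑ i : Fin d, ∫ x in fundDom d, pder i v x * pder i v x * lap v x = P := by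
    rw [hP, ← integral_sum_comm Finset.univ (fun i _ => ((hvi i).mul (hvi i)).mul hLsp)]
    exact icongr fun x => by rw [Finset.sum_mul]
  have f4 : ∑ i : Fin d, ∫ x in fundDom d, v x * pder i (pder i v) x * lap v x = Q := by
    rw [hQdef, ← integral_sum_comm Finset.univ (fun i _ => (hv.mul ((hvi i).pder i)).mul hLsp)]
    refine icongr fun x => ?_
    have h1 : ∑ i, v x * pder i (pder i v) x * lap v x
        = (∑ i, pder i (pder i v) x) * (v x * lap v x) := by
      rw [Finset.sum_mul]
      exact Finset.sum_congr rfl fun i _ => by ring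
    rw [h1, show (∑ i, pder i (pder i v) x) = lap v x from rfl]
    ring
  have key2 : A = -P - Q := by
    rw [hA, Finset.sum_congr rfl fun i _ => (f1 i).trans (congrArg Neg.neg (f2 i)),
      Finset.sum_neg_distrib, Finset.sum_add_distrib, f3, f4]
    ring
  -- Step 3 : P = -(2B)
  have g1 : P = ∑ j : Fin d, ∫ x in fundDom d,
      (∑ i, pder i v x * pder i v x) * pder j (pder j v) x := by
    rw [hP, ← integral_sum_comm Finset.univ
      (fun j _ => (SP.sum fun i _ => (hvi i).mul (hvi i)).mul ((hvi j).pder j))]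
    exact icongr fun x => by simp [lap, Finset.mul_sum]
  have g2 : ∀ j : Fin d, ∫ x in fundDom d,
        (∑ i, pder i v x * pder i v x) * pder j (pder j v) x
      = -∫ x in fundDom d, pder j (fun y => ∑ i, pder i v y * pder i v y) x * pder j v x :=
    fun j => ibp hd (SP.sum fun i _ => (hvi i).mul (hvi i)) (hvi j) j
  have g3 : ∀ j : Fin d, ∫ x in fundDom d,
        pder j (fun y => ∑ i, pder i v y * pder i v y) x * pder j v x
      = 2 * ∫ x in fundDom d, (∑ i, pder i v x * pder j (pder i v) x) * pder j v x := by
    intro j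
    rw [← integral_const_mul]
    refine icongr fun x => ?_
    rw [pder_sum Finset.univ (a := fun i y => pder i v y * pder i v y) (fun i _ => ((hvid i).mul (hvid i))) j x]
    rw [Finset.sum_congr rfl fun i (_ : i ∈ Finset.univ) => pder_mul (hvid i) (hvid i) j x]
    rw [Finset.sum_congr rfl fun i (_ : i ∈ Finset.univ) =>
      (by ring : pder j (pder i v) x * pder i v x + pder i v x * pder j (pder i v) x
        = 2 * (pder i v x * pder j (pder i v) x)),
      ← Finset.mul_sum]
    ring
  have key3 : P = -(2 * B) := by
    calc P = ∑ j : Fin d, ∫ x in fundDom d,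
        (∑ i, pder i v x * pder i v x) * pder j (pder j v) x := g1
      _ = ∑ j : Fin d, -(2 * ∫ x in fundDom d,
          (∑ i, pder i v x * pder j (pder i v) x) * pder j v x) :=
        Finset.sum_congr rfl fun j _ => (g2 j).trans (congrArg Neg.neg (g3 j))
      _ = -(2 * B) := by
        rw [Finset.sum_neg_distrib, ← Finset.mul_sum, ← hB]
  -- Step 4 : B = -(R + A)
  have m1 : ∀ j : Fin d, ∫ x in fundDom d,
        (∑ i, pder i v x * pder j (pder i v) x) * pder j v x
      = -∫ x in fundDom d,
          pder j (fun y => ∑ i, pder i v y * pder j (pder i v) y) x * v x :=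
    fun j => ibp hd (SP.sum fun i _ => (hvi i).mul ((hvi i).pder j)) hv j
  have m2 : ∀ j : Fin d, ∫ x in fundDom d,
        pder j (fun y => ∑ i, pder i v y * pder j (pder i v) y) x * v x
      = ∫ x in fundDom d, (∑ i, (pder j (pder i v) x * pder j (pder i v) x
          + pder i v x * pder j (pder j (pder i v)) x)) * v x := by
    intro j
    refine icongr fun x => ?_
    rw [pder_sum Finset.univ (a := fun i y => pder i v y * pder j (pder i v) y) (fun i _ => (hvid i).mul (hviid i j)) j x]
    rw [Finset.sum_congr rfl fun i (_ : i ∈ Finset.univ) => pder_mul (hvid i) (hviid i j) j x]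
  have hpt : ∀ x, ∑ j, (∑ i, (pder j (pder i v) x * pder j (pder i v) x
        + pder i v x * pder j (pder j (pder i v)) x)) * v x
      = v x * (∑ j, ∑ i, pder j (pder i v) x * pder j (pder i v) x)
        + ∑ i, v x * pder i v x * pder i (lap v) x := by
    intro x
    have hb : ∀ i : Fin d, ∑ j, pder i v x * pder j (pder j (pder i v)) x
        = pder i v x * pder i (lap v) x := by
      intro i; rw [← Finset.mul_sum, third_swap hv i x]
    calc ∑ j, (∑ i, (pder j (pder i v) x * pder j (pder i v) x
          + pder i v x * pder j (pder j (pder i v)) x)) * v x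
        = (∑ j, ∑ i, pder j (pder i v) x * pder j (pder i v) x) * v x
          + (∑ j, ∑ i, pder i v x * pder j (pder j (pder i v)) x) * v x := by
          simp only [Finset.sum_add_distrib, add_mul, ← Finset.sum_mul]
      _ = v x * (∑ j, ∑ i, pder j (pder i v) x * pder j (pder i v) x)
          + (∑ i, ∑ j, pder i v x * pder j (pder j (pder i v)) x) * v x := by
          rw [show (∑ j, ∑ i, pder i v x * pder j (pder j (pder i v)) x)
            = ∑ i, ∑ j, pder i v x * pder j (pder j (pder i v)) x from Finset.sum_comm]
          ring
      _ = v x * (∑ j, ∑ i, pder j (pder i v) x * pder j (pder i v) x)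
          + ∑ i, v x * pder i v x * pder i (lap v) x := by
          rw [Finset.sum_congr rfl fun i _ => hb i, Finset.sum_mul]
          congr 1
          exact Finset.sum_congr rfl fun i _ => by ring
  have m3 : ∑ j : Fin d, ∫ x in fundDom d, (∑ i, (pder j (pder i v) x * pder j (pder i v) x
        + pder i v x * pder j (pder j (pder i v)) x)) * v x = R + A := by
    rw [← integral_sum_comm Finset.univ (fun j _ =>
      (SP.sum fun i _ => SP.add (((hvi i).pder j).mul ((hvi i).pder j))
        ((hvi i).mul (((hvi i).pder j).pder j))).mul hv)]
    rw [icongr hpt]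
    rw [integral_add
      (hv.mul (SP.sum fun j _ => SP.sum fun i _ =>
        ((hvi i).pder j).mul ((hvi i).pder j))).integrableOn
      (SP.sum fun i _ => (hv.mul (hvi i)).mul (hLi i)).integrableOn]
    rw [hRdef, hA]
    congr 1
    exact integral_sum_comm Finset.univ fun i _ => (hv.mul (hvi i)).mul (hLi i)
  have key4 : B = -(R + A) := by
    calc B = ∑ j : Fin d, ∫ x in fundDom d,
        (∑ i, pder i v x * pder j (pder i v) x) * pder j v x := hB
      _ = ∑ j : Fin d, -∫ x in fundDom d, (∑ i, (pder j (pder i v) x * pder j (pder i v) x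
          + pder i v x * pder j (pder j (pder i v)) x)) * v x :=
        Finset.sum_congr rfl fun j _ => (m1 j).trans (congrArg Neg.neg (m2 j))
      _ = -(R + A) := by rw [Finset.sum_neg_distrib, m3]
  -- positivity
  have hQ : 0 ≤ Q := by
    rw [hQdef]
    refine setIntegral_nonneg measurableSet_fundDom fun x _ => ?_
    rw [mul_assoc]; exact mul_nonneg (hpos x) (mul_self_nonneg _)
  have hRn : 0 ≤ R := by
    rw [hRdef]
    refine setIntegral_nonneg measurableSet_fundDom fun x _ => ?_
    exact mul_nonneg (hpos x)
      (Finset.sum_nonneg fun j _ => Finset.sum_nonneg fun i _ => mul_self_nonneg _)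
  have hCn : 0 ≤ C := by
    rw [hC]
    refine Finset.sum_nonneg fun i _ => setIntegral_nonneg measurableSet_fundDom fun x _ => ?_
    exact mul_nonneg (hpos x) (mul_self_nonneg _)
  have hAn : A ≤ 0 := by linarith
  rw [key1]
  have h5 : 0 ≤ g * -A := mul_nonneg hg (by linarith)
  rw [mul_neg] at h5
  have h6 : 0 ≤ μ * C := mul_nonneg hμ hCn
  linarith

section Slice

variable {d : ℕ} {h : ℝ × EuclideanSpace ℝ (Fin d) → ℝ}

theorem slice_hasFDerivAt (hsm : ContDiff ℝ (⊤ : ℕ∞) h) (s : ℝ)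
    (x : EuclideanSpace ℝ (Fin d)) :
    HasFDerivAt (fun y => h (s, y))
      ((fderiv ℝ h (s, x)).comp ((0 : EuclideanSpace ℝ (Fin d) →L[ℝ] ℝ).prod
        (ContinuousLinearMap.id ℝ (EuclideanSpace ℝ (Fin d))))) x := by
  have h1 : HasFDerivAt (fun y : EuclideanSpace ℝ (Fin d) => (s, y))
      ((0 : EuclideanSpace ℝ (Fin d) →L[ℝ] ℝ).prod
        (ContinuousLinearMap.id ℝ (EuclideanSpace ℝ (Fin d)))) x :=
    HasFDerivAt.prodMk (hasFDerivAt_const s x) (hasFDerivAt_id x)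
  exact ((cd_diff hsm (s, x)).hasFDerivAt).comp x h1

theorem pder_slice (hsm : ContDiff ℝ (⊤ : ℕ∞) h) (s : ℝ) (x : EuclideanSpace ℝ (Fin d))
    (i : Fin d) :
    pder i (fun y => h (s, y)) x = fderiv ℝ h (s, x) (0, EuclideanSpace.single i 1) := by
  show fderiv ℝ (fun y => h (s, y)) x (EuclideanSpace.single i 1) = _
  rw [(slice_hasFDerivAt hsm s x).fderiv]
  simp

theorem deriv_slice (hsm : ContDiff ℝ (⊤ : ℕ∞) h) (t : ℝ) (x : EuclideanSpace ℝ (Fin d)) :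
    deriv (fun s => h (s, x)) t = fderiv ℝ h (t, x) ((1 : ℝ), (0 : EuclideanSpace ℝ (Fin d))) := by
  have h1 : HasDerivAt (fun s : ℝ => (s, x)) ((1 : ℝ), (0 : EuclideanSpace ℝ (Fin d))) t :=
    (hasDerivAt_id t).prodMk (hasDerivAt_const t x)
  have h2 : HasDerivAt (fun s : ℝ => h (s, x))
      (fderiv ℝ h (t, x) ((1 : ℝ), (0 : EuclideanSpace ℝ (Fin d)))) t :=
    ((cd_diff hsm (t, x)).hasFDerivAt).comp_hasDerivAt t h1
  exact h2.deriv

/-- time derivative of a directional space derivative -/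
theorem hasDerivAt_dir (hsm : ContDiff ℝ (⊤ : ℕ∞) h) (s : ℝ) (x : EuclideanSpace ℝ (Fin d))
    (v0 : ℝ × EuclideanSpace ℝ (Fin d)) :
    HasDerivAt (fun s' => fderiv ℝ h (s', x) v0)
      (fderiv ℝ (fderiv ℝ h) (s, x) ((1 : ℝ), (0 : EuclideanSpace ℝ (Fin d))) v0) s := by
  have h1 : HasDerivAt (fun s' : ℝ => (s', x)) ((1 : ℝ), (0 : EuclideanSpace ℝ (Fin d))) s :=
    (hasDerivAt_id s).prodMk (hasDerivAt_const s x)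
  have h2 : HasDerivAt (fun s' : ℝ => fderiv ℝ h (s', x))
      (fderiv ℝ (fderiv ℝ h) (s, x) ((1 : ℝ), (0 : EuclideanSpace ℝ (Fin d)))) s :=
    ((cd_diff (cd_fderiv hsm) (s, x)).hasFDerivAt).comp_hasDerivAt s h1
  have h3 := h2.clm_apply (hasDerivAt_const s v0)
  simpa using h3

/-- spatial pder of the time derivative slice -/
theorem pder_time_slice (hsm : ContDiff ℝ (⊤ : ℕ∞) h) (t : ℝ) (x : EuclideanSpace ℝ (Fin d))
    (i : Fin d) :
    pder i (fun y => fderiv ℝ h (t, y) ((1 : ℝ), (0 : EuclideanSpace ℝ (Fin d)))) x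
      = fderiv ℝ (fderiv ℝ h) (t, x) (0, EuclideanSpace.single i 1)
          ((1 : ℝ), (0 : EuclideanSpace ℝ (Fin d))) := by
  have h1 : HasFDerivAt (fun y : EuclideanSpace ℝ (Fin d) => (t, y))
      ((0 : EuclideanSpace ℝ (Fin d) →L[ℝ] ℝ).prod
        (ContinuousLinearMap.id ℝ (EuclideanSpace ℝ (Fin d)))) x :=
    HasFDerivAt.prodMk (hasFDerivAt_const t x) (hasFDerivAt_id x)
  have h2 : HasFDerivAt (fun y : EuclideanSpace ℝ (Fin d) => fderiv ℝ h (t, y))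
      ((fderiv ℝ (fderiv ℝ h) (t, x)).comp ((0 : EuclideanSpace ℝ (Fin d) →L[ℝ] ℝ).prod
        (ContinuousLinearMap.id ℝ (EuclideanSpace ℝ (Fin d))))) x :=
    ((cd_diff (cd_fderiv hsm) (t, x)).hasFDerivAt).comp x h1
  have h3 := h2.clm_apply
    (hasFDerivAt_const ((1 : ℝ), (0 : EuclideanSpace ℝ (Fin d))) x)
  show fderiv ℝ (fun y => fderiv ℝ h (t, y) ((1:ℝ), (0 : EuclideanSpace ℝ (Fin d)))) x
    (EuclideanSpace.single i 1) = _
  rw [h3.fderiv]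
  simp

theorem schwarz_prod (hsm : ContDiff ℝ (⊤ : ℕ∞) h) (p v0 w0 : ℝ × EuclideanSpace ℝ (Fin d)) :
    fderiv ℝ (fderiv ℝ h) p v0 w0 = fderiv ℝ (fderiv ℝ h) p w0 v0 :=
  second_derivative_symmetric (fun q => (cd_diff hsm q).hasFDerivAt)
    ((cd_diff (cd_fderiv hsm) p).hasFDerivAt) _ _

end Slice

end Lub

open Lub

/-- Decay of the `L²`-norm of the gradient for the lubrication equation
`∂ₜh − div(g h ∇h − μ h ∇Δh) = 0` on `𝕋^d` (second half of Theorem `Theo2`). -/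
theorem lubrication_gradL2_decay (d : ℕ) (hd : 1 ≤ d) (g μ : ℝ) (hg : 0 ≤ g) (hμ : 0 ≤ μ)
    (T : ℝ) (h : ℝ × EuclideanSpace ℝ (Fin d) → ℝ)
    (hsm : ContDiff ℝ (⊤ : ℕ∞) h)
    (hper : ∀ t, ZPeriodic (fun x => h (t, x)))
    (hpos : ∀ t x, 0 < h (t, x))
    (heq : ∀ t ∈ Set.Icc (0 : ℝ) T, ∀ x,
      deriv (fun s => h (s, x)) t
        - (∑ i, pder i (fun y =>
            g * h (t, y) * pder i (fun z => h (t, z)) y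
            - μ * h (t, y) * pder i (lap (fun z => h (t, z))) y) x) = 0) :
    ∀ t ∈ Set.Icc (0 : ℝ) T,
      deriv (fun s => ∫ x in fundDom d, gradSq (fun y => h (s, y)) x) t ≤ 0 := by
  intro t ht
  have hDh : ContDiff ℝ (⊤ : ℕ∞) (fderiv ℝ h) := cd_fderiv hsm
  -- `G` and `G'` on pairs
  have hGpc : ContDiff ℝ (⊤ : ℕ∞) (fun p : ℝ × EuclideanSpace ℝ (Fin d) =>
      ∑ i, (fderiv ℝ h p (0, EuclideanSpace.single i 1)) ^ 2) :=
    ContDiff.sum fun i _ => (hDh.clm_apply contDiff_const).pow 2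
  have hG'c : ContDiff ℝ (⊤ : ℕ∞) (fun p : ℝ × EuclideanSpace ℝ (Fin d) =>
      ∑ i, 2 * fderiv ℝ h p (0, EuclideanSpace.single i 1)
        * fderiv ℝ (fderiv ℝ h) p ((1 : ℝ), (0 : EuclideanSpace ℝ (Fin d)))
            (0, EuclideanSpace.single i 1)) :=
    ContDiff.sum fun i _ => (contDiff_const.mul (hDh.clm_apply contDiff_const)).mul
      (((cd_fderiv hDh).clm_apply contDiff_const).clm_apply contDiff_const)
  -- derivative in time of `G`
  have hder : ∀ (s : ℝ) (x : EuclideanSpace ℝ (Fin d)),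
      HasDerivAt (fun s' => ∑ i, (fderiv ℝ h (s', x) (0, EuclideanSpace.single i 1)) ^ 2)
        (∑ i, 2 * fderiv ℝ h (s, x) (0, EuclideanSpace.single i 1)
          * fderiv ℝ (fderiv ℝ h) (s, x) ((1 : ℝ), (0 : EuclideanSpace ℝ (Fin d)))
              (0, EuclideanSpace.single i 1)) s := by
    intro s x
    refine HasDerivAt.fun_sum fun i _ => ?_
    have h1 := (hasDerivAt_dir hsm s x (0, EuclideanSpace.single i 1)).fun_pow 2
    simpa [pow_one, mul_comm, mul_assoc, mul_left_comm] using h1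
  -- the bound on a compact neighbourhood
  obtain ⟨M, hM⟩ := ((isCompact_Icc (a := t - 1) (b := t + 1)).prod
    (isCompact_closedBall (0 : EuclideanSpace ℝ (Fin d)) (d + 1))).exists_bound_of_continuousOn
    (hG'c.continuous.continuousOn)
  have hbound : ∀ᵐ x ∂(volume.restrict (fundDom d)), ∀ s ∈ Metric.ball t 1,
      ‖∑ i, 2 * fderiv ℝ h (s, x) (0, EuclideanSpace.single i 1)
        * fderiv ℝ (fderiv ℝ h) (s, x) ((1 : ℝ), (0 : EuclideanSpace ℝ (Fin d)))
            (0, EuclideanSpace.single i 1)‖ ≤ M := by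
    refine (ae_restrict_iff' measurableSet_fundDom).2 (Filter.Eventually.of_forall
      fun x hx => fun s hs => ?_)
    have habs : |s - t| < 1 := by
      rw [← Real.dist_eq]; exact Metric.mem_ball.mp hs
    have h1 := abs_lt.mp habs
    exact hM (s, x) ⟨⟨by linarith [h1.1], by linarith [h1.2]⟩, fundDom_subset_ball hx⟩
  -- differentiation under the integral sign
  have main := hasDerivAt_integral_of_dominated_loc_of_deriv_le (𝕜 := ℝ)
    (μ := volume.restrict (fundDom d)) (x₀ := t) (s := Metric.ball t 1)
    (F := fun s x => ∑ i, (fderiv ℝ h (s, x) (0, EuclideanSpace.single i 1)) ^ 2)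
    (F' := fun s x => ∑ i, 2 * fderiv ℝ h (s, x) (0, EuclideanSpace.single i 1)
      * fderiv ℝ (fderiv ℝ h) (s, x) ((1 : ℝ), (0 : EuclideanSpace ℝ (Fin d)))
          (0, EuclideanSpace.single i 1))
    (bound := fun _ => M) (Metric.ball_mem_nhds t one_pos)
    (Filter.Eventually.of_forall fun s =>
      ((hGpc.continuous.comp (continuous_const.prodMk continuous_id)).aestronglyMeasurable))
    (integrableOn_fundDom
      (hGpc.continuous.comp (continuous_const.prodMk continuous_id)))
    ((hG'c.continuous.comp (continuous_const.prodMk continuous_id)).aestronglyMeasurable)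
    hbound (integrableOn_const volume_fundDom_lt_top.ne)
    (Filter.Eventually.of_forall fun x s _ => hder s x)
  -- rewrite the function whose derivative we take
  have hfun : (fun s => ∫ x in fundDom d, gradSq (fun y => h (s, y)) x)
      = fun s => ∫ x in fundDom d,
          ∑ i, (fderiv ℝ h (s, x) (0, EuclideanSpace.single i 1)) ^ 2 := by
    funext s
    refine icongr fun x => ?_
    show ∑ i, (pder i (fun y => h (s, y)) x) ^ 2 = _
    exact Finset.sum_congr rfl fun i _ => by rw [pder_slice hsm s x i]
  rw [hfun, main.2.deriv]
  -- identify the integrand at time `t`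
  have hwW : (fun y => fderiv ℝ h (t, y) ((1 : ℝ), (0 : EuclideanSpace ℝ (Fin d))))
      = fun y => ∑ i, pder i (fun z =>
          g * h (t, z) * pder i (fun z' => h (t, z')) z
          - μ * h (t, z) * pder i (lap (fun z' => h (t, z'))) z) y := by
    funext y
    have h0 := heq t ht y
    rw [← deriv_slice hsm t y]
    linarith
  have hfinal : ∀ x, (∑ i, 2 * fderiv ℝ h (t, x) (0, EuclideanSpace.single i 1)
      * fderiv ℝ (fderiv ℝ h) (t, x) ((1 : ℝ), (0 : EuclideanSpace ℝ (Fin d)))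
          (0, EuclideanSpace.single i 1))
      = 2 * ∑ i, pder i (fun z => h (t, z)) x * pder i (fun y => ∑ i, pder i (fun z =>
          g * h (t, z) * pder i (fun z' => h (t, z')) z
          - μ * h (t, z) * pder i (lap (fun z' => h (t, z'))) z) y) x := by
    intro x
    rw [Finset.mul_sum]
    refine Finset.sum_congr rfl fun i _ => ?_
    rw [← pder_slice hsm t x i]
    rw [schwarz_prod hsm (t, x) ((1 : ℝ), (0 : EuclideanSpace ℝ (Fin d)))
      (0, EuclideanSpace.single i 1)]
    rw [← pder_time_slice hsm t x i]
    rw [hwW]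
    ring
  rw [icongr hfinal, integral_const_mul]
  have hvsp : SP (fun z => h (t, z)) :=
    ⟨hsm.comp (contDiff_const.prodMk contDiff_id), hper t⟩
  have hell := elliptic hd hvsp (fun x => (hpos t x).le) hg hμ
  linarith
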